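/- Every strongly modular poset is modular, i.e. if a poset (P,≤) satisfies the identities (2) L(U(x,y),U(x,z)) = L(U(x ∪ L(y,U(x,z)))) and (3) L(U(L(x,z),y),z) = L(U(L(x,z) ∪ L(y,z))) for all x,y,z ∈ P, then for all x,y,z ∈ P with x ≤ z it holds that L(U(x,y),z) = L(U(x ∪ L(y,z))). -/
import Mathlib


/-- A poset is strongly modular if it satisfies the identities
(2) `L(U(x,y),U(x,z)) = L(U(x, L(y,U(x,z))))` and
(3) `L(U(L(x,z),y),z) = L(U(L(x,z), L(y,z)))`. -/
def StronglyModularPoset (P : Type*) [PartialOrder P] : Prop :=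
  (∀ x y z : P,
    lowerBounds (upperBounds {x, y} ∪ upperBounds {x, z}) =
      lowerBounds (upperBounds ({x} ∪ lowerBounds ({y} ∪ upperBounds {x, z})))) ∧
  (∀ x y z : P,
    lowerBounds (upperBounds (lowerBounds {x, z} ∪ {y}) ∪ {z}) =
      lowerBounds (upperBounds (lowerBounds {x, z} ∪ lowerBounds {y, z})))

theorem stmt_15 {P : Type*} [PartialOrder P] (hsmod : StronglyModularPoset P) :
    ∀ x y z : P, x ≤ z →
      lowerBounds (upperBounds {x, y} ∪ {z}) =
        lowerBounds (upperBounds ({x} ∪ lowerBounds {y, z})) := by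
  intro x y z hxz
  have h3 := hsmod.2 x y z
  have hLxz : lowerBounds ({x, z} : Set P) = Set.Iic x := by
    ext w
    simp only [lowerBounds_insert, lowerBounds_singleton, Set.mem_inter_iff, Set.mem_Iic]
    exact ⟨fun h => h.1, fun h => ⟨h, h.trans hxz⟩⟩
  have hUIic : upperBounds (Set.Iic x) = upperBounds ({x} : Set P) := by
    ext u
    constructor
    · intro h
      intro w hw
      rw [Set.mem_singleton_iff] at hw
      subst hw
      exact h Set.self_mem_Iic
    · intro h w hw
      exact hw.trans (h (Set.mem_singleton x))
  have hU1 : upperBounds (Set.Iic x ∪ {y}) = upperBounds ({x, y} : Set P) := by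
    rw [upperBounds_union, hUIic, ← upperBounds_union]
    rfl
  have hU2 : upperBounds (Set.Iic x ∪ lowerBounds {y, z}) =
      upperBounds ({x} ∪ lowerBounds ({y, z} : Set P)) := by
    rw [upperBounds_union, hUIic, ← upperBounds_union]
  rw [hLxz, hU1, hU2] at h3
  exact h3
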